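/- Fix x ∈ ℝ with x > −1. Then the function β ↦ log(β·(1+x)^(1−β) + (1−β)·(1+x)^(−β)) / (β·(1−β)) tends to log(1+x) − x/(1+x) as β tends to 1 within the open interval (0,1). -/

import Mathlib

open Real Filter

theorem renyi_logdet_limit_beta_one (x : ℝ) (hx : -1 < x) :
    Tendsto (fun β : ℝ =>
        Real.log (β * (1 + x) ^ (1 - β) + (1 - β) * (1 + x) ^ (-β)) / (β * (1 - β)))
      (nhdsWithin 1 (Set.Ioo (0 : ℝ) 1)) (nhds (Real.log (1 + x) - x / (1 + x))) := by
  have ht0 : (0:ℝ) < 1 + x := by linarith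
  set g : ℝ → ℝ := fun β => Real.log (1 + β * x) - β * Real.log (1 + x) with hg
  have hg1 : g 1 = 0 := by simp [hg, add_comm]
  have hderiv : HasDerivAt g (x / (1 + x) - Real.log (1 + x)) 1 := by
    have h1 : HasDerivAt (fun β : ℝ => 1 + β * x) x 1 := by
      simpa using ((hasDerivAt_id (1:ℝ)).mul_const x).const_add 1
    have h2 : HasDerivAt (fun β : ℝ => Real.log (1 + β * x)) (x / (1 + x)) 1 := by
      have := h1.log (by norm_num; linarith)
      simpa using this
    have h3 : HasDerivAt (fun β : ℝ => β * Real.log (1 + x)) (Real.log (1 + x)) 1 := by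
      simpa using (hasDerivAt_id (1:ℝ)).mul_const (Real.log (1 + x))
    exact h2.sub h3
  have hslope := hasDerivAt_iff_tendsto_slope.mp hderiv
  have hsub : Set.Ioo (0:ℝ) 1 ⊆ {(1:ℝ)}ᶜ := fun y hy => ne_of_lt hy.2
  have hslope' : Tendsto (slope g 1) (nhdsWithin 1 (Set.Ioo (0:ℝ) 1))
      (nhds (x / (1 + x) - Real.log (1 + x))) :=
    hslope.mono_left (nhdsWithin_mono 1 hsub)
  have hinv : Tendsto (fun β : ℝ => -1 / β) (nhdsWithin 1 (Set.Ioo (0:ℝ) 1)) (nhds (-1)) := by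
    have hc : ContinuousAt (fun β : ℝ => -1 / β) 1 :=
      continuousAt_const.div continuousAt_id (by norm_num)
    have := hc.continuousWithinAt (s := Set.Ioo (0:ℝ) 1)
    simpa using this.tendsto
  have hmul := hinv.mul hslope'
  have hval : (-1) * (x / (1 + x) - Real.log (1 + x)) = Real.log (1 + x) - x / (1 + x) := by ring
  rw [hval] at hmul
  refine hmul.congr' ?_
  filter_upwards [self_mem_nhdsWithin] with β hβ
  have hβ0 : 0 < β := hβ.1
  have hβ1 : β < 1 := hβ.2
  have hpos : 0 < 1 + β * x := by nlinarith
  have hrw : (1 + x) ^ (1 - β) = (1 + x) ^ (-β) * (1 + x) := by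
    rw [← Real.rpow_add_one (ne_of_gt ht0)]; ring_nf
  have harg : β * (1 + x) ^ (1 - β) + (1 - β) * (1 + x) ^ (-β)
      = (1 + x) ^ (-β) * (1 + β * x) := by
    rw [hrw]; ring
  have hlog : Real.log (β * (1 + x) ^ (1 - β) + (1 - β) * (1 + x) ^ (-β))
      = -β * Real.log (1 + x) + Real.log (1 + β * x) := by
    rw [harg, Real.log_mul (ne_of_gt (Real.rpow_pos_of_pos ht0 _)) (ne_of_gt hpos),
      Real.log_rpow ht0]
  have hslopeval : slope g 1 β = g β / (β - 1) := by
    rw [slope_def_field, hg1]; simp [div_eq_inv_mul]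
  rw [hslopeval, hg]
  simp only
  rw [hlog]
  have h1 : β ≠ 0 := ne_of_gt hβ0
  have h2 : β - 1 ≠ 0 := by intro h; linarith [sub_eq_zero.mp h]
  have h3 : (1:ℝ) - β ≠ 0 := by intro h; linarith [sub_eq_zero.mp h]
  field_simp
  ring
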